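/- arXiv:1002.0045 — 3 statements merged into one kernel-verified Lean document; each statement's English description precedes it below -/
import Mathlib

section
/- If H is a graph with maximum degree Δ and d_1,...,d_t are nonnegative integers satisfying d_1+...+d_t = Δ - t + 1, then there is a partition V(H) = V_1 ∪ ... ∪ V_t such that for each 1 ≤ i ≤ t, the subgraph of H induced on V_i has maximum degree at most d_i. -/
open Finset

/-- Lemma of Lovász: if `H` has maximum degree `Δ` and `d₁,…,d_t` are nonnegative
integers with `d₁+⋯+d_t = Δ - t + 1`, there is a partition `V(H) = V₁ ∪ ⋯ ∪ V_t`
such that the induced subgraph on `V_i` has maximum degree at most `d_i`. -/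
theorem lovasz_degree_partition {V : Type} [Fintype V] [DecidableEq V]
    (H : SimpleGraph V) [DecidableRel H.Adj] (Δ t : ℕ)
    (hΔ : ∀ v, H.degree v ≤ Δ)
    (d : Fin t → ℕ) (hd : (∑ i, d i) + t = Δ + 1) :
    ∃ P : V → Fin t, ∀ v : V,
      ((H.neighborFinset v).filter (fun u => P u = P v)).card ≤ d (P v) := by
  have ht : 0 < t := by
    rcases Nat.eq_zero_or_pos t with h | h
    · subst h; simp at hd
    · exact h
  haveI : Nonempty (Fin t) := ⟨⟨0, ht⟩⟩
  set F : (V → Fin t) → V → ℤ := fun Q u =>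
    (((H.neighborFinset u).filter (fun w => Q w = Q u)).card : ℤ) - 2 * d (Q u) with hF
  obtain ⟨P, -, hmin⟩ := Finset.exists_min_image (Finset.univ : Finset (V → Fin t))
    (fun Q => ∑ u, F Q u) ⟨Classical.arbitrary _, mem_univ _⟩
  refine ⟨P, fun v => ?_⟩
  by_contra hv
  push_neg at hv
  set i := P v with hi
  -- there is a class j with few neighbors of v
  have hex : ∃ j, (((H.neighborFinset v).filter (fun w => P w = j)).card ≤ d j) := by
    by_contra hall
    push_neg at hall
    have h1 : ∑ j : Fin t, (d j + 1) ≤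
        ∑ j : Fin t, ((H.neighborFinset v).filter (fun w => P w = j)).card :=
      Finset.sum_le_sum (fun j _ => hall j)
    have hpart : (H.neighborFinset v).card =
        ∑ j : Fin t, ((H.neighborFinset v).filter (fun w => P w = j)).card :=
      Finset.card_eq_sum_card_fiberwise (fun x _ => mem_univ (P x))
    have hdeg : (H.neighborFinset v).card ≤ Δ := hΔ v
    rw [Finset.sum_add_distrib, Finset.sum_const, card_univ, Fintype.card_fin,
      smul_eq_mul, mul_one, hd] at h1
    omega
  obtain ⟨j, hj⟩ := hex
  have hji : j ≠ i := by
    intro h; subst h; omega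
  set P' : V → Fin t := Function.update P v j with hP'
  -- key facts about P'
  have hP'v : P' v = j := Function.update_self v j P
  have hP'ne : ∀ w, w ≠ v → P' w = P w := fun w hw => Function.update_of_ne hw j P
  -- difference per vertex
  have hdiffv : F P' v - F P v =
      ((((H.neighborFinset v).filter (fun w => P w = j)).card : ℤ) - 2 * d j)
      - ((((H.neighborFinset v).filter (fun w => P w = i)).card : ℤ) - 2 * d i) := by
    have hfil : (H.neighborFinset v).filter (fun w => P' w = j) =
        (H.neighborFinset v).filter (fun w => P w = j) := by
      apply Finset.filter_congr
      intro w hw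
      have hadj : H.Adj v w := by simpa using hw
      simp [hP'ne w hadj.ne']
    simp only [hF, hP'v, hfil, ← hi]
  have hdiffu : ∀ u, u ≠ v → F P' u - F P u =
      (if u ∈ H.neighborFinset v ∧ P u = j then (1:ℤ) else 0)
      - (if u ∈ H.neighborFinset v ∧ P u = i then (1:ℤ) else 0) := by
    intro u hu
    have hPu : P' u = P u := hP'ne u hu
    have hcard : ∀ Q : V → Fin t,
        (((H.neighborFinset u).filter (fun w => Q w = Q u)).card : ℤ)
        = ∑ w ∈ H.neighborFinset u, (if Q w = Q u then (1:ℤ) else 0) := by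
      intro Q
      exact (Finset.sum_boole _ _).symm
    simp only [hF]
    rw [hcard P', hcard P, hPu]
    have hgen : ∀ a b c r : ℤ, a - b = r → a - c - (b - c) = r := by
      intros a b c r h; linarith
    apply hgen
    rw [← Finset.sum_sub_distrib]
    have hterm : ∀ w ∈ H.neighborFinset u,
        ((if P' w = P u then (1:ℤ) else 0) - (if P w = P u then (1:ℤ) else 0))
        = if w = v then ((if P u = j then (1:ℤ) else 0) - (if P u = i then (1:ℤ) else 0)) else 0 := by
      intro w hw
      by_cases hwv : w = v
      · subst hwv
        simp only [hP'v, ← hi, if_pos rfl]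
        congr 1 <;> simp [eq_comm]
      · simp [hP'ne w hwv, hwv]
    rw [Finset.sum_congr rfl hterm, Finset.sum_ite_eq' (H.neighborFinset u) v]
    have hmem : v ∈ H.neighborFinset u ↔ u ∈ H.neighborFinset v := by
      simp [SimpleGraph.adj_comm]
    by_cases hadj : u ∈ H.neighborFinset v
    · rw [if_pos (hmem.mpr hadj)]
      congr 1 <;> simp [hadj]
    · rw [if_neg (fun h => hadj (hmem.mp h))]
      simp [hadj]
  -- sum of the differences over u ≠ v
  have hsum_erase : ∑ u ∈ Finset.univ.erase v, (F P' u - F P u) =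
      (((H.neighborFinset v).filter (fun w => P w = j)).card : ℤ)
      - (((H.neighborFinset v).filter (fun w => P w = i)).card : ℤ) := by
    have h1 : ∑ u ∈ Finset.univ.erase v, (F P' u - F P u)
        = ∑ u ∈ Finset.univ.erase v,
          ((if u ∈ H.neighborFinset v ∧ P u = j then (1:ℤ) else 0)
           - (if u ∈ H.neighborFinset v ∧ P u = i then (1:ℤ) else 0)) := by
      apply Finset.sum_congr rfl
      intro u hu
      exact hdiffu u (Finset.ne_of_mem_erase hu)
    rw [h1, Finset.sum_sub_distrib]
    have h2 : ∀ c : Fin t, ∑ u ∈ Finset.univ.erase v,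
        (if u ∈ H.neighborFinset v ∧ P u = c then (1:ℤ) else 0)
        = (((H.neighborFinset v).filter (fun w => P w = c)).card : ℤ) := by
      intro c
      have hset : (Finset.univ.erase v).filter (fun u => u ∈ H.neighborFinset v ∧ P u = c)
          = (H.neighborFinset v).filter (fun w => P w = c) := by
        ext a
        simp only [Finset.mem_filter, Finset.mem_erase, Finset.mem_univ, true_and]
        constructor
        · rintro ⟨_, h1, h2⟩; exact ⟨h1, h2⟩
        · rintro ⟨h1, h2⟩
          have hadj : H.Adj v a := by simpa using h1
          exact ⟨⟨hadj.ne', trivial⟩, h1, h2⟩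
      rw [Finset.sum_boole, hset]
    rw [h2 j, h2 i]
  -- totals
  have htot : ∑ u, F P' u - ∑ u, F P u =
      2 * ((((H.neighborFinset v).filter (fun w => P w = j)).card : ℤ)
      - (((H.neighborFinset v).filter (fun w => P w = i)).card : ℤ))
      - 2 * (d j : ℤ) + 2 * (d i : ℤ) := by
    rw [← Finset.sum_sub_distrib,
      ← Finset.sum_erase_add Finset.univ _ (Finset.mem_univ v), hsum_erase, hdiffv]
    ring
  have hDj : (((H.neighborFinset v).filter (fun w => P w = j)).card : ℤ) ≤ d j := by
    exact_mod_cast hj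
  have hDi : (d i : ℤ) + 1 ≤ (((H.neighborFinset v).filter (fun w => P w = i)).card : ℤ) := by
    exact_mod_cast hv
  have hlt : ∑ u, F P' u < ∑ u, F P u := by
    have : ∑ u, F P' u - ∑ u, F P u ≤ -2 := by rw [htot]; linarith
    linarith
  exact absurd (hmin P' (mem_univ P')) (not_le.mpr hlt)
end

section
/- Let G be a (1/2,λ)-pseudo-random graph, and let P and W be disjoint vertex subsets such that every vertex of P has fewer than (1/2 - δ)|W| neighbors in W. Then |P| < λ²/(δ²|W|). -/
open Finset

lemma card_interedges_sum {V : Type} [Fintype V] [DecidableEq V]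
    (G : SimpleGraph V) [DecidableRel G.Adj] (P W : Finset V) :
    (Rel.interedges G.Adj P W).card = ∑ v ∈ P, (W.filter (G.Adj v)).card := by
  rw [Rel.interedges_eq_biUnion, card_biUnion]
  · simp
  · intro x hx y hy hxy
    simp only [disjoint_left, mem_map, Function.Embedding.coeFn_mk]
    rintro a ⟨b, hb, rfl⟩ ⟨c, hc, h⟩
    exact absurd (congrArg Prod.fst h).symm hxy

/-- In a (1/2,λ)-pseudo-random graph, if every vertex of P has fewer than
(1/2 - δ)|W| neighbors in the disjoint set W, then |P| < λ²/(δ²|W|). -/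
theorem pseudorandom_few_low_degree {V : Type} [Fintype V] [DecidableEq V]
    (G : SimpleGraph V) [DecidableRel G.Adj] (lam δ : ℝ) (hδ : 0 < δ)
    (hpr : ∀ A B : Finset V, Disjoint A B → A.Nonempty → B.Nonempty →
      |(G.edgeDensity A B : ℝ) - 1 / 2| ≤ lam / Real.sqrt ((A.card : ℝ) * B.card))
    (P W : Finset V) (hPW : Disjoint P W) (hP : P.Nonempty) (hW : W.Nonempty)
    (hdeg : ∀ v ∈ P, ((W.filter (G.Adj v)).card : ℝ) < (1 / 2 - δ) * W.card) :
    (P.card : ℝ) < lam ^ 2 / (δ ^ 2 * W.card) := by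
  have hPpos : (0:ℝ) < P.card := by exact_mod_cast card_pos.2 hP
  have hWpos : (0:ℝ) < W.card := by exact_mod_cast card_pos.2 hW
  -- edge count bound
  have hsum : ((Rel.interedges G.Adj P W).card : ℝ) < (1/2 - δ) * W.card * P.card := by
    rw [card_interedges_sum]
    push_cast
    calc (∑ v ∈ P, ((W.filter (G.Adj v)).card : ℝ)) < ∑ _v ∈ P, (1/2 - δ) * W.card :=
          Finset.sum_lt_sum_of_nonempty hP hdeg
      _ = (1/2 - δ) * W.card * P.card := by rw [sum_const, nsmul_eq_mul]; ring
  have hdens : (G.edgeDensity P W : ℝ) < 1/2 - δ := by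
    have : (G.edgeDensity P W : ℝ) = ((Rel.interedges G.Adj P W).card : ℝ) / (P.card * W.card) := by
      rw [SimpleGraph.edgeDensity, Rel.edgeDensity]
      push_cast
      ring
    rw [this, div_lt_iff₀ (by positivity)]
    calc ((Rel.interedges G.Adj P W).card : ℝ) < (1/2 - δ) * W.card * P.card := hsum
      _ = (1/2 - δ) * (P.card * W.card) := by ring
  have habs : δ < |(G.edgeDensity P W : ℝ) - 1/2| := by
    rw [abs_sub_comm, lt_abs]
    left; linarith
  have h2 := hpr P W hPW hP hW
  have hlt : δ < lam / Real.sqrt (P.card * W.card) := lt_of_lt_of_le habs h2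
  have hsq : (0:ℝ) < Real.sqrt (P.card * W.card) := Real.sqrt_pos.2 (by positivity)
  have h3 : δ * Real.sqrt (P.card * W.card) < lam := by
    rw [← lt_div_iff₀ hsq] at *; exact hlt
  have h4 : (δ * Real.sqrt (P.card * W.card))^2 < lam^2 := by
    have hn : 0 ≤ δ * Real.sqrt (P.card * W.card) := by positivity
    exact pow_lt_pow_left₀ h3 hn (by norm_num)
  have h5 : δ^2 * (P.card * W.card) < lam^2 := by
    have : Real.sqrt ((P.card : ℝ) * W.card) ^ 2 = (P.card : ℝ) * W.card :=
      Real.sq_sqrt (by positivity)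
    calc δ^2 * (P.card * W.card) = (δ * Real.sqrt (P.card * W.card))^2 := by
          rw [mul_pow, this]
      _ < lam^2 := h4
  rw [lt_div_iff₀ (by positivity)]
  nlinarith
end

section
/- Let G be a (1/2,λ)-pseudo-random graph, and let P and W be disjoint vertex subsets such that every vertex of P has more than (1/2 + δ)|W| neighbors in W. Then |P| < λ²/(δ²|W|). -/
open Finset

/-- In a (1/2,λ)-pseudo-random graph, if every vertex of P has more than
(1/2 + δ)|W| neighbors in the disjoint set W, then |P| < λ²/(δ²|W|). -/
theorem pseudorandom_few_high_degree {V : Type} [Fintype V] [DecidableEq V]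
    (G : SimpleGraph V) [DecidableRel G.Adj] (lam δ : ℝ) (hδ : 0 < δ)
    (hpr : ∀ A B : Finset V, Disjoint A B → A.Nonempty → B.Nonempty →
      |(G.edgeDensity A B : ℝ) - 1 / 2| ≤ lam / Real.sqrt ((A.card : ℝ) * B.card))
    (P W : Finset V) (hPW : Disjoint P W) (hP : P.Nonempty) (hW : W.Nonempty)
    (hdeg : ∀ v ∈ P, (1 / 2 + δ) * W.card < ((W.filter (G.Adj v)).card : ℝ)) :
    (P.card : ℝ) < lam ^ 2 / (δ ^ 2 * W.card) := by
  have hPpos : (0:ℝ) < P.card := by exact_mod_cast card_pos.2 hP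
  have hWpos : (0:ℝ) < W.card := by exact_mod_cast card_pos.2 hW
  -- count interedges
  have hcard : ((Rel.interedges G.Adj P W).card : ℝ)
      = ∑ v ∈ P, ((W.filter (G.Adj v)).card : ℝ) := by
    rw [Rel.interedges_eq_biUnion, card_biUnion]
    · simp [card_map]
    · intro x hx y hy hxy
      simp only [disjoint_left, mem_map, Function.Embedding.coeFn_mk]
      rintro a ⟨b, _, rfl⟩ ⟨c, _, h⟩
      exact hxy (congrArg Prod.fst h).symm
  -- density lower bound
  have hdens : (1 / 2 + δ) < (G.edgeDensity P W : ℝ) := by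
    have hsum : (1 / 2 + δ) * W.card * P.card < ∑ v ∈ P, ((W.filter (G.Adj v)).card : ℝ) := by
      calc (1 / 2 + δ) * W.card * P.card = ∑ _v ∈ P, (1 / 2 + δ) * W.card := by
            rw [Finset.sum_const, nsmul_eq_mul]; ring
        _ < ∑ v ∈ P, ((W.filter (G.Adj v)).card : ℝ) :=
            Finset.sum_lt_sum_of_nonempty hP hdeg
    rw [SimpleGraph.edgeDensity, Rel.edgeDensity]
    push_cast
    rw [lt_div_iff₀ (by positivity)]
    calc (1 / 2 + δ) * (P.card * W.card) = (1 / 2 + δ) * W.card * P.card := by ring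
      _ < ∑ v ∈ P, ((W.filter (G.Adj v)).card : ℝ) := hsum
      _ = ((Rel.interedges G.Adj P W).card : ℝ) := hcard.symm
  have hle := hpr P W hPW hP hW
  have h2 : δ < lam / Real.sqrt ((P.card : ℝ) * W.card) := by
    have : δ < |(G.edgeDensity P W : ℝ) - 1 / 2| := by
      have : δ < (G.edgeDensity P W : ℝ) - 1 / 2 := by linarith
      exact lt_of_lt_of_le this (le_abs_self _)
    linarith
  have hsq : Real.sqrt ((P.card : ℝ) * W.card) > 0 := Real.sqrt_pos.2 (by positivity)
  have h3 : δ * Real.sqrt ((P.card : ℝ) * W.card) < lam := by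
    rw [div_eq_mul_inv] at h2
    calc δ * Real.sqrt ((P.card : ℝ) * W.card)
        < lam * (Real.sqrt ((P.card : ℝ) * W.card))⁻¹ * Real.sqrt ((P.card : ℝ) * W.card) :=
          by exact mul_lt_mul_of_pos_right h2 hsq
      _ = lam := by field_simp
  have h4 : δ ^ 2 * ((P.card : ℝ) * W.card) < lam ^ 2 := by
    have hsqsq : Real.sqrt ((P.card : ℝ) * W.card) ^ 2 = (P.card : ℝ) * W.card :=
      Real.sq_sqrt (by positivity)
    have hnn : 0 ≤ δ * Real.sqrt ((P.card : ℝ) * W.card) := by positivity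
    nlinarith [sq_nonneg (δ * Real.sqrt ((P.card : ℝ) * W.card))]
  rw [lt_div_iff₀ (by positivity)]
  nlinarith
end
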